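/- Any two Galois rings with the same parameters are isomorphic: if A and B are finite commutative local rings, both of characteristic p^n, both with maximal ideal generated by p, and whose residue fields both have exactly p^r elements, then A and B are isomorphic as rings. -/

import Mathlib

open Polynomial IsLocalRing

lemma zmod_p_dvd {p n : ℕ} (hn : 0 < n) (c : ZMod (p ^ n))
    (h : ZMod.castHom (dvd_pow_self p hn.ne') (ZMod p) c = 0) :
    ∃ d, c = (p : ZMod (p ^ n)) * d := by
  by_cases hp0 : p ^ n = 0
  · have hp : p = 0 := pow_eq_zero_iff hn.ne' |>.mp hp0
    have hdvd : p ∣ p ^ n := dvd_pow_self p hn.ne'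
    have hdvd' : p ^ n ∣ p := by rw [hp0, hp]
    let g : ZMod p →+* ZMod (p ^ n) := ZMod.castHom hdvd' (ZMod (p ^ n))
    have hcomp : g.comp (ZMod.castHom hdvd (ZMod p)) = RingHom.id _ := RingHom.ext_zmod _ _
    refine ⟨0, ?_⟩
    have : c = g (ZMod.castHom hdvd (ZMod p) c) := by
      rw [← RingHom.comp_apply, hcomp, RingHom.id_apply]
    rw [this, h, map_zero, mul_zero]
  haveI : NeZero (p ^ n) := ⟨hp0⟩
  obtain ⟨m, rfl⟩ := ZMod.natCast_zmod_surjective (n := p ^ n) c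
  rw [map_natCast] at h
  haveI : NeZero p := ⟨by rintro rfl; exact hp0 (zero_pow hn.ne')⟩
  rw [ZMod.natCast_eq_zero_iff] at h
  obtain ⟨d, rfl⟩ := h
  exact ⟨(d : ZMod (p ^ n)), by push_cast; ring⟩

lemma exists_div_p {p n : ℕ} (hn : 0 < n) (S : Polynomial (ZMod (p ^ n)))
    (h : S.map (ZMod.castHom (dvd_pow_self p hn.ne') (ZMod p)) = 0) :
    ∃ T : Polynomial (ZMod (p ^ n)), S = C (p : ZMod (p ^ n)) * T ∧ T.degree ≤ S.degree := by
  have hc : ∀ i, ∃ d, S.coeff i = (p : ZMod (p ^ n)) * d := by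
    intro i
    apply zmod_p_dvd hn
    have := congrArg (fun q => Polynomial.coeff q i) h
    simpa [Polynomial.coeff_map] using this
  choose d hd using hc
  refine ⟨∑ i ∈ S.support, Polynomial.monomial i (d i), ?_, ?_⟩
  · rw [Finset.mul_sum]
    conv_lhs => rw [S.as_sum_support]
    refine Finset.sum_congr rfl fun i _ => ?_
    rw [hd i, ← Polynomial.C_mul_monomial]
  · refine (Polynomial.degree_sum_le _ _).trans ?_
    rw [Finset.sup_le_iff]
    intro i hi
    exact (Polynomial.degree_monomial_le _ _).trans (Polynomial.le_degree_of_mem_supp i hi)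

lemma isAdicComplete_of_pow_eq_bot {R : Type*} [CommRing R] (I : Ideal R) (n : ℕ)
    (h : I ^ n = ⊥) : IsAdicComplete I R := by
  refine { toIsHausdorff := ⟨?_⟩, toIsPrecomplete := ⟨?_⟩ }
  · intro x hx
    have := hx n
    rw [SModEq.sub_mem, sub_zero] at this
    simpa [h] using this
  · intro f hf
    refine ⟨f n, fun k => ?_⟩
    rcases le_total k n with hk | hk
    · exact hf hk
    · have h0 : f n ≡ f k [SMOD (I ^ n • ⊤ : Submodule R R)] := hf hk
      rw [SModEq.sub_mem] at h0 ⊢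
      have hb : (I ^ n • ⊤ : Submodule R R) = ⊥ := by simp [h]
      rw [hb, Submodule.mem_bot, sub_eq_zero] at h0
      simp [h0.symm, Submodule.zero_mem]

lemma henselian_of_pow_eq_bot {A : Type*} [CommRing A] [IsLocalRing A] (n : ℕ)
    (h : (maximalIdeal A) ^ n = ⊥) : HenselianLocalRing A := by
  haveI := isAdicComplete_of_pow_eq_bot (maximalIdeal A) n h
  haveI : HenselianRing A (maximalIdeal A) := inferInstance
  constructor
  intro f hf a₀ h₁ h₂
  exact HenselianRing.is_henselian f hf a₀ h₁ (h₂.map (Ideal.Quotient.mk _))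

lemma galois_ring_presentation (p n r : ℕ) (hp : p.Prime) (hn : 0 < n) (hr : 0 < r)
    (A : Type) [CommRing A] [Fintype A] [IsLocalRing A]
    (hchar : CharP A (p ^ n))
    (hmax : maximalIdeal A = Ideal.span {(p : A)})
    (hres : Nat.card (ResidueField A) = p ^ r)
    (q : Polynomial (ZMod p)) (hq : Irreducible q) (hqm : q.Monic) (hqdeg : q.natDegree = r)
    (F : Polynomial (ZMod (p ^ n))) (hFm : F.Monic)
    (hFq : F.map (ZMod.castHom (dvd_pow_self p hn.ne') (ZMod p)) = q)
    (f : ZMod p →+* ResidueField A) (β₀ : ResidueField A)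
    (hβ : q.eval₂ f β₀ = 0) :
    Nonempty ((Polynomial (ZMod (p ^ n)) ⧸ Ideal.span {F}) ≃+* A) := by
  haveI := Fact.mk hp
  set toZp := ZMod.castHom (dvd_pow_self p hn.ne') (ZMod p) with htoZp
  haveI := hchar
  set ι : ZMod (p ^ n) →+* A := ZMod.castHom dvd_rfl A with hι
  -- basic facts
  have hpnA : (p : A) ^ n = 0 := by
    have := CharP.cast_eq_zero A (p ^ n)
    rwa [Nat.cast_pow] at this
  have hmaxpow : maximalIdeal A ^ n = ⊥ := by
    rw [hmax, Ideal.span_singleton_pow, hpnA, Ideal.span_singleton_eq_bot.mpr rfl]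
  haveI hhens : HenselianLocalRing A := henselian_of_pow_eq_bot n hmaxpow
  have hunit : ∀ x : A, residue A x ≠ 0 → IsUnit x := by
    intro x hx
    by_contra hu
    exact hx (Ideal.Quotient.eq_zero_iff_mem.mpr hu)
  -- commuting squares
  have hcombined : (residue A).comp ι = f.comp toZp := RingHom.ext_zmod _ _
  have hcomm : ∀ (G : Polynomial (ZMod (p ^ n))) (x : A),
      residue A (G.eval₂ ι x) = (G.map toZp).eval₂ f (residue A x) := by
    intro G x
    rw [Polynomial.hom_eval₂, hcombined, Polynomial.eval₂_map]
  -- lift β₀ and apply Hensel's lemma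
  obtain ⟨b₀, hb₀⟩ := Ideal.Quotient.mk_surjective (I := maximalIdeal A) β₀
  have hb₀' : residue A b₀ = β₀ := hb₀
  have hFA_monic : (F.map ι).Monic := hFm.map ι
  have hmem : (F.map ι).eval b₀ ∈ maximalIdeal A := by
    rw [← Ideal.Quotient.eq_zero_iff_mem]
    show residue A _ = 0
    rw [Polynomial.eval_map, hcomm, hb₀', hFq, hβ]
  obtain ⟨sa, sb, hsab⟩ := PerfectField.separable_of_irreducible hq
  have hq'ne : q.derivative.eval₂ f β₀ ≠ 0 := by
    intro h0
    have := congrArg (Polynomial.eval₂ f β₀) hsab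
    simp only [Polynomial.eval₂_add, Polynomial.eval₂_mul, hβ, h0, mul_zero, Polynomial.eval₂_one] at this
    simp at this
  have hder : IsUnit ((F.map ι).derivative.eval b₀) := by
    apply hunit
    rw [Polynomial.derivative_map, Polynomial.eval_map, hcomm, hb₀',
      ← Polynomial.derivative_map, hFq]
    exact hq'ne
  obtain ⟨α, hα, hαb⟩ := hhens.is_henselian (F.map ι) hFA_monic b₀ hmem hder
  have hresα : residue A α = β₀ := by
    rw [← hb₀']
    have : residue A (α - b₀) = 0 := Ideal.Quotient.eq_zero_iff_mem.mpr hαb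
    rw [map_sub, sub_eq_zero] at this
    exact this
  set ψ : Polynomial (ZMod (p ^ n)) →+* A := Polynomial.eval₂RingHom ι α with hψdef
  have hψ_eval : ∀ G, ψ G = G.eval₂ ι α := fun G => rfl
  have hψF : ψ F = 0 := by
    rw [hψ_eval, ← Polynomial.eval_map]
    exact hα
  -- algebra structure on the residue field via f
  letI : Algebra (ZMod p) (ResidueField A) := f.toAlgebra
  have haeval : Polynomial.aeval β₀ q = 0 := by rw [Polynomial.aeval_def]; exact hβ
  have hmin : minpoly (ZMod p) β₀ = q := (minpoly.eq_of_irreducible_of_monic hq haeval hqm).symm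
  haveI : Finite (ResidueField A) :=
    Finite.of_surjective (residue A) Ideal.Quotient.mk_surjective
  haveI : Fintype (ResidueField A) := Fintype.ofFinite _
  have hfr : Module.finrank (ZMod p) (ResidueField A) = r := by
    have hcard := Module.card_eq_pow_finrank (K := ZMod p) (V := ResidueField A)
    rw [ZMod.card] at hcard
    have hpr : (p : ℕ) ^ r = p ^ Module.finrank (ZMod p) (ResidueField A) := by
      rw [← hres, Nat.card_eq_fintype_card, hcard]
    exact (Nat.pow_right_injective hp.two_le hpr).symm
  have hint : IsIntegral (ZMod p) β₀ := IsIntegral.of_finite _ _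
  have hadj : Algebra.adjoin (ZMod p) {β₀} = ⊤ := by
    have h1 := IntermediateField.adjoin.finrank hint
    rw [hmin, hqdeg] at h1
    rw [← IntermediateField.adjoin_simple_toSubalgebra_of_isAlgebraic hint.isAlgebraic,
      ← Algebra.toSubmodule_eq_top]
    apply Submodule.eq_top_of_finrank_eq
    rw [Subalgebra.finrank_toSubmodule, IntermediateField.finrank_eq_finrank_subalgebra, h1, hfr]
  -- surjectivity of residue ∘ ψ
  have hres_surj : ∀ y : ResidueField A, ∃ G, residue A (ψ G) = y := by
    intro y
    have hy : y ∈ Algebra.adjoin (ZMod p) {β₀} := by rw [hadj]; trivial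
    rw [Algebra.adjoin_singleton_eq_range_aeval] at hy
    obtain ⟨g, hg⟩ := hy
    have hsurjZ : Function.Surjective toZp := by
      intro y
      obtain ⟨m, rfl⟩ := ZMod.natCast_zmod_surjective y
      exact ⟨(m : ZMod (p ^ n)), map_natCast _ m⟩
    obtain ⟨G, hG⟩ := Polynomial.map_surjective toZp hsurjZ g
    refine ⟨G, ?_⟩
    rw [hψ_eval, hcomm, hresα, hG]
    exact hg
  have hψC : ∀ x : ZMod (p ^ n), ψ (Polynomial.C x) = ι x := by
    intro x; simp [hψ_eval, Polynomial.eval₂_C]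
  have hψp : ∀ k : ℕ, ψ (Polynomial.C ((p : ZMod (p ^ n)) ^ k)) = (p : A) ^ k := by
    intro k; rw [hψC, map_pow, map_natCast]
  -- surjectivity of ψ, by successive approximation
  have key : ∀ k : ℕ, ∀ b : A, ∃ G c, b = ψ G + (p : A) ^ k * c := by
    intro k
    induction k with
    | zero => intro b; exact ⟨0, b, by simp⟩
    | succ k ih =>
      intro b
      obtain ⟨G, c, hGc⟩ := ih b
      obtain ⟨G', hG'⟩ := hres_surj (residue A c)
      have hmem : c - ψ G' ∈ maximalIdeal A := by
        rw [← Ideal.Quotient.eq_zero_iff_mem]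
        show residue A _ = 0
        rw [map_sub, hG', sub_self]
      rw [hmax, Ideal.mem_span_singleton'] at hmem
      obtain ⟨d, hd⟩ := hmem
      refine ⟨G + Polynomial.C ((p : ZMod (p ^ n)) ^ k) * G', d, ?_⟩
      rw [map_add, map_mul, hψp]
      have hc : c = ψ G' + d * (p : A) := by linear_combination -hd
      rw [hGc, hc]
      ring
  have hψsurj : Function.Surjective ψ := by
    intro b
    obtain ⟨G, c, h⟩ := key n b
    rw [hpnA, zero_mul, add_zero] at h
    exact ⟨G, h.symm⟩
  -- the kernel of ψ is exactly (F)
  haveI : Fact (1 < p ^ n) := ⟨Nat.one_lt_pow hn.ne' hp.one_lt⟩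
  have hdegFq : F.degree = q.degree := by rw [← hFq, (hFm.degree_map toZp)]
  have hkerF : RingHom.ker ψ = Ideal.span {F} := by
    apply le_antisymm
    · intro G hG
      rw [RingHom.mem_ker] at hG
      set R := G %ₘ F with hRdef
      have hdeg : R.degree < F.degree := Polynomial.degree_modByMonic_lt G hFm
      have hGdecomp : F * (G /ₘ F) + R = G := by
        rw [hRdef, add_comm]; exact Polynomial.modByMonic_add_div G F
      have hRα : ψ R = 0 := by
        have h2 : ψ F * ψ (G /ₘ F) + ψ R = 0 := by
          rw [← map_mul, ← map_add, hGdecomp, hG]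
        rwa [hψF, zero_mul, zero_add] at h2
      have main : ∀ k, k ≤ n →
          ∃ S, R = Polynomial.C ((p : ZMod (p ^ n)) ^ k) * S ∧ S.degree < F.degree := by
        intro k
        induction k with
        | zero => intro _; exact ⟨R, by simp, hdeg⟩
        | succ k ih =>
          intro hk
          obtain ⟨S, hS, hSdeg⟩ := ih (Nat.le_of_succ_le hk)
          have hevalS : (p : A) ^ k * ψ S = 0 := by
            rw [← hψp, ← map_mul, ← hS, hRα]
          have hSm : residue A (ψ S) = 0 := by
            by_contra h0
            obtain ⟨u, hu⟩ := hunit _ h0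
            have hpk : (p : A) ^ k = 0 := by
              have := congrArg (fun z => z * (↑u⁻¹ : A)) hevalS
              simpa [← hu, mul_assoc] using this
            have hcast : ((p ^ k : ℕ) : A) = 0 := by rw [Nat.cast_pow]; exact hpk
            have hdvd := (CharP.cast_eq_zero_iff A (p ^ n) (p ^ k)).mp hcast
            have hle := (Nat.pow_dvd_pow_iff_le_right hp.one_lt).mp hdvd
            omega
          have hSbar : (S.map toZp).eval₂ f β₀ = 0 := by
            rw [← hresα, ← hcomm, ← hψ_eval]
            exact hSm
          have hdvd : q ∣ S.map toZp := by
            rw [← hmin]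
            exact minpoly.dvd _ _ (by rw [Polynomial.aeval_def]; exact hSbar)
          have hzero : S.map toZp = 0 := by
            apply Polynomial.eq_zero_of_dvd_of_degree_lt hdvd
            calc (S.map toZp).degree ≤ S.degree := Polynomial.degree_map_le
              _ < F.degree := hSdeg
              _ = q.degree := hdegFq
          obtain ⟨T, hT, hTdeg⟩ := exists_div_p hn S hzero
          refine ⟨T, ?_, lt_of_le_of_lt hTdeg hSdeg⟩
          rw [hS, hT, ← mul_assoc, ← Polynomial.C_mul, ← pow_succ]
      obtain ⟨S, hS, _⟩ := main n le_rfl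
      have hpZ : ((p : ZMod (p ^ n))) ^ n = 0 := by
        have := CharP.cast_eq_zero (ZMod (p ^ n)) (p ^ n)
        rwa [Nat.cast_pow] at this
      rw [hpZ, map_zero, zero_mul] at hS
      rw [Ideal.mem_span_singleton]
      refine ⟨G /ₘ F, ?_⟩
      conv_lhs => rw [← hGdecomp]
      rw [hS, add_zero]
    · rw [Ideal.span_le, Set.singleton_subset_iff]
      exact hψF
  exact ⟨(Ideal.quotEquivOfEq hkerF.symm).trans (RingHom.quotientKerEquivOfSurjective hψsurj)⟩

lemma residueField_charP {A : Type} [CommRing A] [IsLocalRing A] {p : ℕ} (hp : p.Prime)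
    (hmax : maximalIdeal A = Ideal.span {(p : A)}) : CharP (ResidueField A) p := by
  rw [CharP.charP_iff_prime_eq_zero hp]
  have hm : (p : A) ∈ maximalIdeal A := hmax ▸ Ideal.mem_span_singleton_self _
  have := Ideal.Quotient.eq_zero_iff_mem.mpr hm
  exact (map_natCast (residue A) p).symm.trans this

/-- **Uniqueness of Galois rings.** Any two finite commutative local rings of
characteristic `p ^ n`, whose maximal ideal is generated by `p`, and whose residue
fields both have `p ^ r` elements, are isomorphic as rings. -/
theorem galois_ring_unique (p n r : ℕ) (hp : p.Prime) (hn : 0 < n) (hr : 0 < r)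
    (A B : Type) [CommRing A] [Fintype A] [IsLocalRing A]
    [CommRing B] [Fintype B] [IsLocalRing B]
    (hcharA : CharP A (p ^ n)) (hcharB : CharP B (p ^ n))
    (hmaxA : IsLocalRing.maximalIdeal A = Ideal.span {(p : A)})
    (hmaxB : IsLocalRing.maximalIdeal B = Ideal.span {(p : B)})
    (hresA : Nat.card (IsLocalRing.ResidueField A) = p ^ r)
    (hresB : Nat.card (IsLocalRing.ResidueField B) = p ^ r) :
    Nonempty (A ≃+* B) := by
  haveI := Fact.mk hp
  haveI : Finite (ResidueField A) :=
    Finite.of_surjective (residue A) Ideal.Quotient.mk_surjective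
  haveI : Finite (ResidueField B) :=
    Finite.of_surjective (residue B) Ideal.Quotient.mk_surjective
  haveI : Fintype (ResidueField A) := Fintype.ofFinite _
  haveI : Fintype (ResidueField B) := Fintype.ofFinite _
  haveI hchkA : CharP (ResidueField A) p := residueField_charP hp hmaxA
  haveI hchkB : CharP (ResidueField B) p := residueField_charP hp hmaxB
  letI : Algebra (ZMod p) (ResidueField A) := (ZMod.castHom dvd_rfl _).toAlgebra
  set fA : ZMod p →+* ResidueField A := algebraMap (ZMod p) (ResidueField A) with hfA
  set fB : ZMod p →+* ResidueField B := ZMod.castHom dvd_rfl _ with hfB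
  -- a generator of the unit group of the residue field of A
  obtain ⟨g, hg⟩ := IsCyclic.exists_generator (α := (ResidueField A)ˣ)
  have hint : IsIntegral (ZMod p) ((g : ResidueField A)) := IsIntegral.of_finite _ _
  set q : Polynomial (ZMod p) := minpoly (ZMod p) ((g : ResidueField A)) with hqdef
  have hqm : q.Monic := minpoly.monic hint
  have hq : Irreducible q := minpoly.irreducible hint
  have hrootA : q.eval₂ fA (g : ResidueField A) = 0 := by
    have := minpoly.aeval (ZMod p) ((g : ResidueField A))
    rwa [Polynomial.aeval_def] at this
  -- the adjoin of g is everything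
  have hadj : IntermediateField.adjoin (ZMod p) {(g : ResidueField A)} = ⊤ := by
    rw [eq_top_iff]
    intro x _
    by_cases hx : x = 0
    · subst hx; exact zero_mem _
    · obtain ⟨k, hk⟩ := Subgroup.mem_zpowers_iff.mp (hg (Units.mk0 x hx))
      have hxg : x = (g : ResidueField A) ^ k := by
        rw [← Units.val_zpow_eq_zpow_val, hk]; rfl
      rw [hxg]
      exact IntermediateField.pow_mem _ (IntermediateField.mem_adjoin_simple_self _ _) k
  have hfrA : Module.finrank (ZMod p) (ResidueField A) = r := by
    have hcard := Module.card_eq_pow_finrank (K := ZMod p) (V := ResidueField A)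
    rw [ZMod.card] at hcard
    have hpr : (p : ℕ) ^ r = p ^ Module.finrank (ZMod p) (ResidueField A) := by
      rw [← hresA, Nat.card_eq_fintype_card, hcard]
    exact (Nat.pow_right_injective hp.two_le hpr).symm
  have hqdeg : q.natDegree = r := by
    have h1 := IntermediateField.adjoin.finrank hint
    rw [hadj, IntermediateField.finrank_top', hfrA] at h1
    exact h1.symm
  -- lift q to a monic polynomial over ZMod (p^n)
  set toZp := ZMod.castHom (dvd_pow_self p hn.ne') (ZMod p) with htoZp
  have hsurjZ : Function.Surjective toZp := by
    intro y
    obtain ⟨m, rfl⟩ := ZMod.natCast_zmod_surjective y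
    exact ⟨(m : ZMod (p ^ n)), map_natCast _ m⟩
  have hlift : q ∈ Polynomial.lifts toZp := by
    rw [Polynomial.mem_lifts]
    exact Polynomial.map_surjective toZp hsurjZ q
  haveI : Fact (1 < p ^ n) := ⟨Nat.one_lt_pow hn.ne' hp.one_lt⟩
  obtain ⟨F, hFq, hFdeg, hFm⟩ := Polynomial.lifts_and_degree_eq_and_monic hlift hqm
  -- a root of q in the residue field of B
  have hcards : Fintype.card (ResidueField A) = Fintype.card (ResidueField B) := by
    rw [← Nat.card_eq_fintype_card, ← Nat.card_eq_fintype_card, hresA, hresB]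
  obtain e := FiniteField.ringEquivOfCardEq hcards
  have hrootB : q.eval₂ fB (e (g : ResidueField A)) = 0 := by
    have h1 := congrArg (e : ResidueField A →+* ResidueField B) hrootA
    rw [map_zero, Polynomial.hom_eval₂] at h1
    have h2 : (e : ResidueField A →+* ResidueField B).comp fA = fB := RingHom.ext_zmod _ _
    rw [h2] at h1
    exact h1
  obtain ⟨eA⟩ := galois_ring_presentation p n r hp hn hr A hcharA hmaxA hresA
    q hq hqm hqdeg F hFm hFq fA (g : ResidueField A) hrootA
  obtain ⟨eB⟩ := galois_ring_presentation p n r hp hn hr B hcharB hmaxB hresB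
    q hq hqm hqdeg F hFm hFq fB (e (g : ResidueField A)) hrootB
  exact ⟨eA.symm.trans eB⟩
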